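/- For every n ≥ 6, the asymmetric index of the cycle graph on n vertices satisfies ai(C_n) = 2. -/

import Mathlib

open SimpleGraph
/-- A simple graph is *asymmetric* if its only automorphism is the identity. -/
def SimpleGraph.IsAsymmetric {V : Type*} (G : SimpleGraph V) : Prop :=
  ∀ f : G ≃g G, ∀ v : V, f v = v

/-- The *asymmetric index* `ai(G)`: the minimum, over all asymmetric graphs `G'` on the
same vertex set, of the number of edges in which `G` and `G'` differ (edges removed plus
edges added); `⊤` (infinity) if no asymmetric graph on the vertex set exists. -/
noncomputable def SimpleGraph.asymIndex {V : Type*} (G : SimpleGraph V) : ℕ∞ :=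
  sInf {n : ℕ∞ | ∃ G' : SimpleGraph V, G'.IsAsymmetric ∧
    n = (symmDiff G.edgeSet G'.edgeSet).encard}

/-- The cycle graph `C_n` on vertex set `ZMod n`: `x` is adjacent to `y` iff
`x - y ≡ ±1 (mod n)`. -/
def SimpleGraph.cycleGraphZMod (n : ℕ) : SimpleGraph (ZMod n) :=
  SimpleGraph.fromRel (fun x y => x - y = 1)

namespace AsymAux
variable {n : ℕ}

lemma cast_inj {a b : ℕ} (ha : a < n) (hb : b < n) :
    ((a : ZMod n) = (b : ZMod n)) ↔ a = b := by
  constructor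
  · intro h
    have := congrArg ZMod.val h
    rwa [ZMod.val_cast_of_lt ha, ZMod.val_cast_of_lt hb] at this
  · rintro rfl; rfl

lemma ne_helper {k : ℕ} (h1 : 0 < k) (h2 : k < n) : ((k : ℕ) : ZMod n) ≠ 0 := by
  intro h
  have := Nat.le_of_dvd h1 ((ZMod.natCast_eq_zero_iff _ _).mp h)
  omega

lemma cyc_adj (x y : ZMod n) :
    (cycleGraphZMod n).Adj x y ↔ x ≠ y ∧ (x - y = 1 ∨ y - x = 1) := by
  simp only [cycleGraphZMod, fromRel_adj]

lemma cyc_refl (c x y : ZMod n) :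
    (cycleGraphZMod n).Adj (c - x) (c - y) ↔ (cycleGraphZMod n).Adj x y := by
  rw [cyc_adj, cyc_adj]
  have e1 : c - x - (c - y) = y - x := by ring
  have e2 : c - y - (c - x) = x - y := by ring
  rw [e1, e2, ne_eq, sub_right_inj, ← ne_eq]
  tauto

/-- A graph on `ZMod n` invariant under some reflection is not asymmetric (n ≥ 6). -/
lemma not_asym_of_refl (hn : 6 ≤ n) {G' : SimpleGraph (ZMod n)} (c : ZMod n)
    (key : ∀ x y : ZMod n, G'.Adj (c - x) (c - y) ↔ G'.Adj x y) :
    ¬ G'.IsAsymmetric := by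
  intro hA
  let f : G' ≃g G' := ⟨Equiv.subLeft c, by intro x y; exact key x y⟩
  have h0 : f 0 = 0 := hA f 0
  have h1 : f 1 = 1 := hA f 1
  have e0 : c - 0 = 0 := h0
  have e1 : c - 1 = 1 := h1
  have : ((2 : ℕ) : ZMod n) = 0 := by push_cast; linear_combination e0 - e1
  exact ne_helper (by omega) (by omega) this

lemma two_le_aux (hn : 6 ≤ n) {G' : SimpleGraph (ZMod n)} (hA : G'.IsAsymmetric) :
    2 ≤ (symmDiff (cycleGraphZMod n).edgeSet G'.edgeSet).encard := by
  by_contra h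
  push_neg at h
  have h1 : (symmDiff (cycleGraphZMod n).edgeSet G'.edgeSet).encard ≤ 1 := by
    exact Order.le_of_lt_add_one h
  rcases Set.encard_le_one_iff_eq.mp h1 with hem | ⟨e, heq⟩
  · -- G' = cycle
    have : (cycleGraphZMod n).edgeSet = G'.edgeSet := by
      rwa [← Set.bot_eq_empty, symmDiff_eq_bot] at hem
    have hG : G' = cycleGraphZMod n := (SimpleGraph.edgeSet_inj.mp this).symm
    subst hG
    exact not_asym_of_refl hn 0 (fun x y => cyc_refl 0 x y) hA
  · -- symmDiff = {e}
    have hmem : e ∈ symmDiff (cycleGraphZMod n).edgeSet G'.edgeSet := by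
      rw [heq]; exact rfl
    induction e using Sym2.ind with
    | _ a b =>
      have hab : a ≠ b := by
        rcases Set.mem_symmDiff.mp hmem with ⟨h', _⟩ | ⟨h', _⟩ <;>
          exact (SimpleGraph.not_isDiag_of_mem_edgeSet _ h') ∘ (Sym2.mk_isDiag_iff.mpr)
      have hchar : ∀ x y : ZMod n,
          G'.Adj x y ↔ Xor' ((cycleGraphZMod n).Adj x y) (s(x,y) = s(a,b)) := by
        intro x y
        have hxy := Set.ext_iff.mp heq s(x,y)
        rw [Set.mem_symmDiff, Set.mem_singleton_iff, SimpleGraph.mem_edgeSet,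
          SimpleGraph.mem_edgeSet] at hxy
        unfold Xor' Xor
        tauto
      apply absurd hA
      apply not_asym_of_refl hn (a + b)
      intro x y
      rw [hchar, hchar]
      have hD : (s(a + b - x, a + b - y) = s(a, b)) ↔ (s(x, y) = s(a, b)) := by
        rw [Sym2.eq_iff, Sym2.eq_iff]
        constructor
        · rintro (⟨h1, h2⟩ | ⟨h1, h2⟩)
          · exact Or.inr ⟨by linear_combination -h1, by linear_combination -h2⟩
          · exact Or.inl ⟨by linear_combination -h1, by linear_combination -h2⟩
        · rintro (⟨h1, h2⟩ | ⟨h1, h2⟩)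
          · exact Or.inr ⟨by linear_combination -h1, by linear_combination -h2⟩
          · exact Or.inl ⟨by linear_combination -h1, by linear_combination -h2⟩
      rw [hD, cyc_refl]


/-- The modified cycle: `C_n` plus the chords `{0,2}` and `{0,3}`. -/
def Gc (n : ℕ) : SimpleGraph (ZMod n) :=
  SimpleGraph.fromRel (fun x y => x - y = 1 ∨ (x = 0 ∧ (y = 2 ∨ y = 3)))

lemma gc_adj (x y : ZMod n) :
    (Gc n).Adj x y ↔ x ≠ y ∧
      (x - y = 1 ∨ y - x = 1 ∨ (x = 0 ∧ (y = 2 ∨ y = 3)) ∨ (y = 0 ∧ (x = 2 ∨ x = 3))) := by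
  simp only [Gc, fromRel_adj]
  tauto

lemma four_in_three {α : Type*} {a b c d p q r : α} (hab : a ≠ b) (hac : a ≠ c) (had : a ≠ d)
    (hbc : b ≠ c) (hbd : b ≠ d) (hcd : c ≠ d)
    (ha : a = p ∨ a = q ∨ a = r) (hb : b = p ∨ b = q ∨ b = r)
    (hc : c = p ∨ c = q ∨ c = r) (hd : d = p ∨ d = q ∨ d = r) : False := by
  rcases ha with rfl | rfl | rfl <;> rcases hb with rfl | rfl | rfl <;>
    rcases hc with rfl | rfl | rfl <;> rcases hd with rfl | rfl | rfl <;> simp_all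

lemma three_in_two {α : Type*} {a b c p q : α} (hab : a ≠ b) (hac : a ≠ c) (hbc : b ≠ c)
    (ha : a = p ∨ a = q) (hb : b = p ∨ b = q) (hc : c = p ∨ c = q) : False := by
  rcases ha with rfl | rfl <;> rcases hb with rfl | rfl <;> rcases hc with rfl | rfl <;> simp_all


lemma gc_asym (hn : 6 ≤ n) : (Gc n).IsAsymmetric := by
  intro f
  -- numeric facts in `ZMod n`
  have h10 : (1 : ZMod n) ≠ 0 := fun h => ne_helper (n := n) (k := 1) (by omega) (by omega)
    (by push_cast; linear_combination h)
  have h20 : (2 : ZMod n) ≠ 0 := fun h => ne_helper (n := n) (k := 2) (by omega) (by omega)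
    (by push_cast; linear_combination h)
  have h30 : (3 : ZMod n) ≠ 0 := fun h => ne_helper (n := n) (k := 3) (by omega) (by omega)
    (by push_cast; linear_combination h)
  have h40 : (4 : ZMod n) ≠ 0 := fun h => ne_helper (n := n) (k := 4) (by omega) (by omega)
    (by push_cast; linear_combination h)
  have h21 : (2 : ZMod n) ≠ 1 := fun h => ne_helper (n := n) (k := 1) (by omega) (by omega)
    (by push_cast; linear_combination h)
  have h31 : (3 : ZMod n) ≠ 1 := fun h => ne_helper (n := n) (k := 2) (by omega) (by omega)
    (by push_cast; linear_combination h)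
  have h32 : (3 : ZMod n) ≠ 2 := fun h => ne_helper (n := n) (k := 1) (by omega) (by omega)
    (by push_cast; linear_combination h)
  have h41 : (4 : ZMod n) ≠ 1 := fun h => ne_helper (n := n) (k := 3) (by omega) (by omega)
    (by push_cast; linear_combination h)
  have h42 : (4 : ZMod n) ≠ 2 := fun h => ne_helper (n := n) (k := 2) (by omega) (by omega)
    (by push_cast; linear_combination h)
  have h43 : (4 : ZMod n) ≠ 3 := fun h => ne_helper (n := n) (k := 1) (by omega) (by omega)
    (by push_cast; linear_combination h)
  have hm1_0 : (-1 : ZMod n) ≠ 0 := fun h => ne_helper (n := n) (k := 1) (by omega) (by omega)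
    (by push_cast; linear_combination -h)
  have hm1_1 : (-1 : ZMod n) ≠ 1 := fun h => ne_helper (n := n) (k := 2) (by omega) (by omega)
    (by push_cast; linear_combination -h)
  have hm1_2 : (-1 : ZMod n) ≠ 2 := fun h => ne_helper (n := n) (k := 3) (by omega) (by omega)
    (by push_cast; linear_combination -h)
  have hm1_3 : (-1 : ZMod n) ≠ 3 := fun h => ne_helper (n := n) (k := 4) (by omega) (by omega)
    (by push_cast; linear_combination -h)
  have hm2_0 : (-2 : ZMod n) ≠ 0 := fun h => ne_helper (n := n) (k := 2) (by omega) (by omega)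
    (by push_cast; linear_combination -h)
  have hm2_1 : (-2 : ZMod n) ≠ 1 := fun h => ne_helper (n := n) (k := 3) (by omega) (by omega)
    (by push_cast; linear_combination -h)
  have hm2_2 : (-2 : ZMod n) ≠ 2 := fun h => ne_helper (n := n) (k := 4) (by omega) (by omega)
    (by push_cast; linear_combination -h)
  have hm2_3 : (-2 : ZMod n) ≠ 3 := fun h => ne_helper (n := n) (k := 5) (by omega) (by omega)
    (by push_cast; linear_combination -h)
  have hm2_m1 : (-2 : ZMod n) ≠ -1 := fun h => ne_helper (n := n) (k := 1) (by omega) (by omega)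
    (by push_cast; linear_combination -h)
  -- basic adjacencies
  have adj_succ : ∀ x : ZMod n, (Gc n).Adj x (x + 1) := by
    intro x
    rw [gc_adj]
    exact ⟨fun h => h10 (by linear_combination -h), Or.inr (Or.inl (by ring))⟩
  have adj01 : (Gc n).Adj 0 1 := by
    rw [gc_adj]; exact ⟨fun h => h10 (by linear_combination -h), Or.inr (Or.inl (by ring))⟩
  have adj0m1 : (Gc n).Adj 0 (-1) := by
    rw [gc_adj]; exact ⟨fun h => hm1_0 (by linear_combination -h), Or.inl (by ring)⟩
  have adj02 : (Gc n).Adj 0 2 := by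
    rw [gc_adj]; exact ⟨fun h => h20 (by linear_combination -h), Or.inr (Or.inr (Or.inl ⟨rfl, Or.inl rfl⟩))⟩
  have adj03 : (Gc n).Adj 0 3 := by
    rw [gc_adj]; exact ⟨fun h => h30 (by linear_combination -h), Or.inr (Or.inr (Or.inl ⟨rfl, Or.inr rfl⟩))⟩
  have adj12 : (Gc n).Adj 1 2 := by
    rw [gc_adj]; exact ⟨fun h => h21 (by linear_combination -h), Or.inr (Or.inl (by ring))⟩
  have adj23 : (Gc n).Adj 2 3 := by
    rw [gc_adj]; exact ⟨fun h => h32 (by linear_combination -h), Or.inr (Or.inl (by ring))⟩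
  have adj34 : (Gc n).Adj 3 4 := by
    rw [gc_adj]; exact ⟨fun h => h43 (by linear_combination -h), Or.inr (Or.inl (by ring))⟩
  -- neighbor structure
  have nbr : ∀ v y : ZMod n, v ≠ 0 → (Gc n).Adj v y → y = v - 1 ∨ y = v + 1 ∨ y = 0 := by
    intro v y hv h
    rw [gc_adj] at h
    rcases h.2 with h' | h' | h' | h'
    · exact Or.inl (by linear_combination -h')
    · exact Or.inr (Or.inl (by linear_combination h'))
    · exact absurd h'.1 hv
    · exact Or.inr (Or.inr h'.1)
  have nbr' : ∀ v y : ZMod n, v ≠ 0 → v ≠ 2 → v ≠ 3 → (Gc n).Adj v y →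
      y = v - 1 ∨ y = v + 1 := by
    intro v y hv hv2 hv3 h
    rw [gc_adj] at h
    rcases h.2 with h' | h' | h' | h'
    · exact Or.inl (by linear_combination -h')
    · exact Or.inr (by linear_combination h')
    · exact absurd h'.1 hv
    · rcases h'.2 with h'' | h''
      · exact absurd h'' hv2
      · exact absurd h'' hv3
  have nbr0 : ∀ y : ZMod n, (Gc n).Adj 0 y → y = 1 ∨ y = -1 ∨ y = 2 ∨ y = 3 := by
    intro y h
    rw [gc_adj] at h
    rcases h.2 with h' | h' | h' | h'
    · exact Or.inr (Or.inl (by linear_combination -h'))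
    · exact Or.inl (by linear_combination h')
    · exact Or.inr (Or.inr h'.2)
    · rcases h'.2 with h'' | h''
      · exact absurd h''.symm h20
      · exact absurd h''.symm h30
  have inj : Function.Injective f := f.toEquiv.injective
  have injs : Function.Injective f.symm := f.toEquiv.symm.injective
  have fadj : ∀ x y : ZMod n, (Gc n).Adj x y → (Gc n).Adj (f x) (f y) :=
    fun x y h => f.map_adj_iff.mpr h
  have fadj' : ∀ x y : ZMod n, (Gc n).Adj x y → (Gc n).Adj (f.symm x) (f.symm y) :=
    fun x y h => f.symm.map_adj_iff.mpr h
  -- f fixes 0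
  have hf0 : f 0 = 0 := by
    by_contra h0
    have m1 := nbr _ _ h0 (fadj _ _ adj01)
    have m2 := nbr _ _ h0 (fadj _ _ adj0m1)
    have m3 := nbr _ _ h0 (fadj _ _ adj02)
    have m4 := nbr _ _ h0 (fadj _ _ adj03)
    exact four_in_three (fun h => hm1_1 (inj h).symm) (fun h => h21 (inj h).symm)
      (fun h => h31 (inj h).symm) (fun h => hm1_2 (inj h)) (fun h => hm1_3 (inj h))
      (fun h => h32 (inj h).symm) m1 m2 m3 m4
  have s0 : f.symm 0 = 0 := by
    have := congrArg f.symm hf0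
    rw [RelIso.symm_apply_apply] at this
    exact this.symm
  -- f fixes -1
  have hfm1 : f (-1) = -1 := by
    have hm := nbr0 (f (-1)) (hf0 ▸ fadj _ _ adj0m1)
    have key : ∀ w : ZMod n, (Gc n).Adj 0 w → (Gc n).Adj (f (-1)) w → False := by
      intro w hw hw2
      have h1' := fadj' _ _ hw
      rw [s0] at h1'
      have h2' := fadj' _ _ hw2
      rw [RelIso.symm_apply_apply] at h2'
      rcases nbr _ _ hm1_0 h2' with h | h | h
      · rw [show (-1 : ZMod n) - 1 = -2 by ring] at h
        rw [h] at h1'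
        rcases nbr0 _ h1' with h' | h' | h' | h'
        · exact hm2_1 h'
        · exact hm2_m1 h'
        · exact hm2_2 h'
        · exact hm2_3 h'
      · rw [show (-1 : ZMod n) + 1 = 0 by ring] at h
        rw [h] at h1'
        exact (Gc n).loopless.irrefl _ h1'
      · rw [h] at h1'
        exact (Gc n).loopless.irrefl _ h1'
    rcases hm with h | h | h | h
    · exact absurd (by rw [h]; exact adj12) (fun hh => key 2 adj02 hh)
    · exact h
    · exact absurd (by rw [h]; exact adj12.symm) (fun hh => key 1 adj01 hh)
    · exact absurd (by rw [h]; exact adj23.symm) (fun hh => key 2 adj02 hh)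
  -- f fixes 1
  have hf1 : f 1 = 1 := by
    have hm := nbr0 (f 1) (hf0 ▸ fadj _ _ adj01)
    rcases hm with h | h | h | h
    · exact h
    · exact absurd (inj (h.trans hfm1.symm)) (fun hh => hm1_1 (hh ▸ rfl))
    · -- f 1 = 2 : impossible, 2 has three distinct neighbors, 1 only two
      exfalso
      have s1 : f.symm 2 = 1 := by
        have := congrArg f.symm h
        rw [RelIso.symm_apply_apply] at this
        exact this.symm
      have n1 := fadj' _ _ adj12.symm
      have n2 := fadj' _ _ adj23
      have n3 := fadj' _ _ adj02.symm
      rw [s1] at n1 n2 n3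
      have e1 := nbr' _ _ h10 (Ne.symm h21) (Ne.symm h31) n1
      have e2 := nbr' _ _ h10 (Ne.symm h21) (Ne.symm h31) n2
      have e3 := nbr' _ _ h10 (Ne.symm h21) (Ne.symm h31) n3
      exact three_in_two (fun hh => h31 (injs hh).symm) (fun hh => h10 (injs hh))
        (fun hh => h30 (injs hh)) e1 e2 e3
    · -- f 1 = 3 : impossible
      exfalso
      have s1 : f.symm 3 = 1 := by
        have := congrArg f.symm h
        rw [RelIso.symm_apply_apply] at this
        exact this.symm
      have n1 := fadj' _ _ adj23.symm
      have n2 := fadj' _ _ adj34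
      have n3 := fadj' _ _ adj03.symm
      rw [s1] at n1 n2 n3
      have e1 := nbr' _ _ h10 (Ne.symm h21) (Ne.symm h31) n1
      have e2 := nbr' _ _ h10 (Ne.symm h21) (Ne.symm h31) n2
      have e3 := nbr' _ _ h10 (Ne.symm h21) (Ne.symm h31) n3
      exact three_in_two (fun hh => h42 (injs hh).symm) (fun hh => h20 (injs hh))
        (fun hh => h40 (injs hh)) e1 e2 e3
  -- f fixes 2
  have hf2 : f 2 = 2 := by
    have := nbr' _ _ h10 (Ne.symm h21) (Ne.symm h31) (hf1 ▸ fadj _ _ adj12)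
    rcases this with h | h
    · rw [show (1 : ZMod n) - 1 = 0 by ring] at h
      exact absurd (inj (h.trans hf0.symm)) h20
    · rw [show (1 : ZMod n) + 1 = 2 by ring] at h
      exact h
  -- f fixes 3
  have hf3 : f 3 = 3 := by
    have hm := nbr0 (f 3) (hf0 ▸ fadj _ _ adj03)
    rcases hm with h | h | h | h
    · exact absurd (inj (h.trans hf1.symm)) h31
    · exact absurd (inj (h.trans hfm1.symm)) (Ne.symm hm1_3)
    · exact absurd (inj (h.trans hf2.symm)) h32
    · exact h
  -- f fixes 4
  have hf4 : f 4 = 4 := by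
    have := nbr _ _ h30 (hf3 ▸ fadj _ _ adj34)
    rcases this with h | h | h
    · rw [show (3 : ZMod n) - 1 = 2 by norm_num] at h
      exact absurd (inj (h.trans hf2.symm)) h42
    · rw [show (3 : ZMod n) + 1 = 4 by norm_num] at h
      exact h
    · exact absurd (inj (h.trans hf0.symm)) h40
  -- induction step
  have hstep : ∀ a : ZMod n, a + 1 ≠ 0 → a + 1 ≠ 2 → a + 1 ≠ 3 → f a = a →
      f (a + 1) = a + 1 → f (a + 2) = a + 2 := by
    intro a e0 e2 e3 ha ha1
    have hadj := fadj _ _ (adj_succ (a + 1))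
    rw [ha1] at hadj
    have trip := nbr' _ _ e0 e2 e3 hadj
    rw [show a + 1 + 1 = a + 2 by ring] at trip
    rw [show a + 1 - 1 = a by ring] at trip
    rcases trip with h | h
    · exact absurd (inj (h.trans ha.symm)) (fun hh => h20 (by linear_combination hh))
    · exact h
  -- main induction
  have main : ∀ m : ℕ, m < n → f ((m : ℕ) : ZMod n) = ((m : ℕ) : ZMod n) := by
    intro m
    induction m using Nat.strong_induction_on with
    | _ m ih =>
      intro hm
      by_cases h4 : m ≤ 4
      · interval_cases m
        · push_cast; exact hf0
        · push_cast; exact hf1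
        · push_cast; exact hf2
        · push_cast; exact hf3
        · push_cast; exact hf4
      · have hlt2 : m - 2 < n := by omega
        have hlt1 : m - 1 < n := by omega
        have ih2 := ih (m - 2) (by omega) hlt2
        have ih1 := ih (m - 1) (by omega) hlt1
        have e1 : ((m - 2 : ℕ) : ZMod n) + 1 = ((m - 1 : ℕ) : ZMod n) := by
          rw [Nat.cast_sub (by omega : 2 ≤ m), Nat.cast_sub (by omega : 1 ≤ m)]
          push_cast
          ring
        have e2 : ((m - 2 : ℕ) : ZMod n) + 2 = ((m : ℕ) : ZMod n) := by
          rw [Nat.cast_sub (by omega : 2 ≤ m)]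
          ring
        have c0 : ((m - 1 : ℕ) : ZMod n) ≠ 0 := ne_helper (by omega) hlt1
        have c2 : ((m - 1 : ℕ) : ZMod n) ≠ 2 := by
          intro h
          rw [show (2 : ZMod n) = ((2 : ℕ) : ZMod n) by push_cast; ring] at h
          have := (cast_inj hlt1 (by omega)).mp h
          omega
        have c3 : ((m - 1 : ℕ) : ZMod n) ≠ 3 := by
          intro h
          rw [show (3 : ZMod n) = ((3 : ℕ) : ZMod n) by push_cast; ring] at h
          have := (cast_inj hlt1 (by omega)).mp h
          omega
        have := hstep _ (by rw [e1]; exact c0) (by rw [e1]; exact c2) (by rw [e1]; exact c3)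
          ih2 (by rw [e1]; exact ih1)
        rwa [e2] at this
  intro v
  haveI : NeZero n := ⟨by omega⟩
  have := main v.val (ZMod.val_lt v)
  rwa [ZMod.natCast_val, ZMod.cast_id] at this


lemma cyc_adj' (x y : ZMod n) :
    (cycleGraphZMod n).Adj x y ↔ x ≠ y ∧ (x - y = 1 ∨ y - x = 1) := by
  simp only [cycleGraphZMod, fromRel_adj]

lemma pair_ne (hn : 6 ≤ n) : s((0 : ZMod n), 2) ≠ s((0 : ZMod n), 3) := by
  intro h
  rw [Sym2.eq_iff] at h
  rcases h with ⟨_, h⟩ | ⟨h, _⟩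
  · exact ne_helper (n := n) (k := 1) (by omega) (by omega) (by push_cast; linear_combination -h)
  · exact ne_helper (n := n) (k := 3) (by omega) (by omega) (by push_cast; linear_combination -h)

lemma symmdiff_eq (hn : 6 ≤ n) :
    symmDiff (cycleGraphZMod n).edgeSet (Gc n).edgeSet =
      {s((0 : ZMod n), 2), s((0 : ZMod n), 3)} := by
  have h02 : (0 : ZMod n) ≠ 2 := fun h =>
    ne_helper (n := n) (k := 2) (by omega) (by omega) (by push_cast; linear_combination -h)
  have h03 : (0 : ZMod n) ≠ 3 := fun h =>
    ne_helper (n := n) (k := 3) (by omega) (by omega) (by push_cast; linear_combination -h)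
  have c02 : ¬((0 : ZMod n) - 2 = 1) := fun h =>
    ne_helper (n := n) (k := 3) (by omega) (by omega) (by push_cast; linear_combination -h)
  have c20 : ¬((2 : ZMod n) - 0 = 1) := fun h =>
    ne_helper (n := n) (k := 1) (by omega) (by omega) (by push_cast; linear_combination h)
  have c03 : ¬((0 : ZMod n) - 3 = 1) := fun h =>
    ne_helper (n := n) (k := 4) (by omega) (by omega) (by push_cast; linear_combination -h)
  have c30 : ¬((3 : ZMod n) - 0 = 1) := fun h =>
    ne_helper (n := n) (k := 2) (by omega) (by omega) (by push_cast; linear_combination h)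
  ext e
  simp only [Set.mem_insert_iff, Set.mem_singleton_iff, Set.mem_symmDiff]
  constructor
  · induction e using Sym2.ind with
    | _ x y =>
      rintro (⟨hc, hg⟩ | ⟨hg, hc⟩)
      · exfalso
        rw [SimpleGraph.mem_edgeSet, cyc_adj'] at hc
        apply hg
        rw [SimpleGraph.mem_edgeSet, gc_adj]
        exact ⟨hc.1, hc.2.elim Or.inl (fun h => Or.inr (Or.inl h))⟩
      · rw [SimpleGraph.mem_edgeSet, gc_adj] at hg
        rw [SimpleGraph.mem_edgeSet, cyc_adj'] at hc
        have hc' : ¬(x - y = 1 ∨ y - x = 1) := fun h => hc ⟨hg.1, h⟩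
        rcases hg.2 with h | h | h | h
        · exact absurd (Or.inl h) hc'
        · exact absurd (Or.inr h) hc'
        · rcases h with ⟨rfl, rfl | rfl⟩
          · exact Or.inl rfl
          · exact Or.inr rfl
        · rcases h with ⟨rfl, rfl | rfl⟩
          · exact Or.inl Sym2.eq_swap
          · exact Or.inr Sym2.eq_swap
  · rintro (rfl | rfl)
    · refine Or.inr ⟨?_, ?_⟩
      · rw [SimpleGraph.mem_edgeSet, gc_adj]
        exact ⟨h02, Or.inr (Or.inr (Or.inl ⟨rfl, Or.inl rfl⟩))⟩
      · rw [SimpleGraph.mem_edgeSet, cyc_adj']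
        rintro ⟨-, h | h⟩
        · exact c02 h
        · exact c20 h
    · refine Or.inr ⟨?_, ?_⟩
      · rw [SimpleGraph.mem_edgeSet, gc_adj]
        exact ⟨h03, Or.inr (Or.inr (Or.inl ⟨rfl, Or.inr rfl⟩))⟩
      · rw [SimpleGraph.mem_edgeSet, cyc_adj']
        rintro ⟨-, h | h⟩
        · exact c03 h
        · exact c30 h

end AsymAux

/-- For `n ≥ 6`, the asymmetric index of the cycle `C_n` is `2`. -/
theorem asymIndex_cycleGraph {n : ℕ} (hn : 6 ≤ n) :
    (SimpleGraph.cycleGraphZMod n).asymIndex = 2 := by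
  unfold SimpleGraph.asymIndex
  apply le_antisymm
  · apply sInf_le
    exact ⟨AsymAux.Gc n, AsymAux.gc_asym hn,
      by rw [AsymAux.symmdiff_eq hn, Set.encard_pair (AsymAux.pair_ne hn)]⟩
  · apply le_sInf
    rintro b ⟨G', hA, rfl⟩
    exact AsymAux.two_le_aux hn hA
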